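/- Let γ_n < 0 with γ_n → 0 and let k_n → ∞ with √{k_n}·γ_n → -∞. Then γ_n²·(1/k_n)·∑_{j=1}^{k_n} j·exp(jγ_n/√{k_n}) → 1 as n → ∞. -/

import Mathlib

open Filter

lemma sum_mul_geom_aux (q : ℝ) (k : ℕ) :
    (1 - q)^2 * ∑ j ∈ Finset.Icc 1 k, (j:ℝ) * q^j
      = q - (k+1) * q^(k+1) + k * q^(k+2) := by
  induction k with
  | zero => simp
  | succ m ih =>
    rw [Finset.sum_Icc_succ_top (by omega), mul_add, ih]
    push_cast
    ring

noncomputable def wgX (γ : ℕ → ℝ) (k : ℕ → ℕ) (n : ℕ) : ℝ := -(γ n) / Real.sqrt (k n)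
noncomputable def wgQ (γ : ℕ → ℝ) (k : ℕ → ℕ) (n : ℕ) : ℝ := Real.exp (γ n / Real.sqrt (k n))
noncomputable def wgB (γ : ℕ → ℝ) (k : ℕ → ℕ) (n : ℕ) : ℝ :=
  1 - ((k n : ℝ) + 1) * wgQ γ k n ^ (k n) + (k n : ℝ) * wgQ γ k n ^ (k n + 1)

open Filter in
theorem weighted_geom_sum_limit (γ : ℕ → ℝ) (k : ℕ → ℕ)
    (hγneg : ∀ n, γ n < 0) (hγ0 : Tendsto γ atTop (nhds 0))
    (hk : Tendsto k atTop atTop)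
    (hkγ : Tendsto (fun n => Real.sqrt (k n) * γ n) atTop atBot) :
    Tendsto (fun n => (γ n) ^ 2 * ((1 / (k n : ℝ)) *
        ∑ j ∈ Finset.Icc 1 (k n), (j : ℝ) * Real.exp (j * γ n / Real.sqrt (k n))))
      atTop (nhds 1) := by
  set x := wgX γ k with hx_def
  set q := wgQ γ k with hq_def
  set B := wgB γ k with hB_def
  have h1 : ∀ᶠ n in atTop, 1 ≤ k n := hk.eventually_ge_atTop 1
  -- basic facts for n with 1 ≤ k n
  have hs_pos : ∀ n, 1 ≤ k n → 0 < Real.sqrt (k n) := by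
    intro n hn
    have : (0:ℝ) < k n := by exact_mod_cast Nat.lt_of_lt_of_le Nat.zero_lt_one hn
    exact Real.sqrt_pos.2 this
  have hx_pos : ∀ n, 1 ≤ k n → 0 < x n := by
    intro n hn
    exact div_pos (neg_pos.2 (hγneg n)) (hs_pos n hn)
  have hq_lt_one : ∀ n, 1 ≤ k n → q n < 1 := by
    intro n hn
    rw [hq_def, wgQ, show (1:ℝ) = Real.exp 0 from Real.exp_zero.symm]
    exact Real.exp_lt_exp.2 (div_neg_of_neg_of_pos (hγneg n) (hs_pos n hn))
  have hq_pos : ∀ n, 0 < q n := fun n => Real.exp_pos _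
  -- x → 0
  have hx0 : Tendsto x atTop (nhds 0) := by
    have hbound : ∀ᶠ n in atTop, ‖x n‖ ≤ |γ n| := by
      filter_upwards [h1] with n hn
      have hs1 : (1:ℝ) ≤ Real.sqrt (k n) := by
        rw [show (1:ℝ) = Real.sqrt 1 from Real.sqrt_one.symm]
        exact Real.sqrt_le_sqrt (by exact_mod_cast hn)
      have hxabs : ‖x n‖ = |γ n| / Real.sqrt (k n) := by
        rw [hx_def, wgX, Real.norm_eq_abs, abs_div, abs_neg,
          abs_of_pos (hs_pos n hn)]
      rw [hxabs]
      exact div_le_self (abs_nonneg _) hs1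
    have hglim : Tendsto (fun n => |γ n|) atTop (nhds 0) := by
      have := hγ0.abs
      simpa using this
    exact squeeze_zero_norm' hbound hglim
  -- q → 1
  have hq1 : Tendsto q atTop (nhds 1) := by
    have hneg : Tendsto (fun n => γ n / Real.sqrt (k n)) atTop (nhds 0) := by
      have : (fun n => γ n / Real.sqrt (k n)) = fun n => -(x n) := by
        funext n; rw [hx_def, wgX]; ring
      rw [this]
      simpa using hx0.neg
    have := (Real.continuous_exp.tendsto 0).comp hneg
    rw [Real.exp_zero] at this
    exact this
  -- u := -(√k * γ) → ∞
  have hu : Tendsto (fun n => -(Real.sqrt (k n) * γ n)) atTop atTop :=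
    tendsto_neg_atBot_atTop.comp hkγ
  -- B → 1
  have hB1 : Tendsto B atTop (nhds 1) := by
    have hlow : Tendsto
        (fun n => 1 - (1 + -(Real.sqrt (k n) * γ n)) *
          Real.exp (-(-(Real.sqrt (k n) * γ n)))) atTop (nhds 1) := by
      have h2 : Tendsto (fun t : ℝ => (1 + t) * Real.exp (-t)) atTop (nhds 0) := by
        have ha : Tendsto (fun t : ℝ => Real.exp (-t)) atTop (nhds 0) :=
          Real.tendsto_exp_atBot.comp tendsto_neg_atTop_atBot
        have hb : Tendsto (fun t : ℝ => t * Real.exp (-t)) atTop (nhds 0) := by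
          simpa using Real.tendsto_pow_mul_exp_neg_atTop_nhds_zero 1
        have := ha.add hb
        simpa [add_mul, one_mul] using this
      have := (h2.comp hu).const_sub 1
      simpa only [Function.comp_def, sub_zero] using this
    apply tendsto_of_tendsto_of_tendsto_of_le_of_le' hlow tendsto_const_nhds
    · -- lower bound
      filter_upwards [h1] with n hn
      have hs := hs_pos n hn
      have hsq : Real.sqrt (k n) ^ 2 = (k n : ℝ) := Real.sq_sqrt (k n).cast_nonneg
      have hdiv : (k n : ℝ) * γ n / Real.sqrt (k n) = Real.sqrt (k n) * γ n := by
        rw [div_eq_iff hs.ne']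
        linear_combination (-(γ n)) * hsq
      have hqk : q n ^ (k n) = Real.exp (Real.sqrt (k n) * γ n) := by
        rw [hq_def, wgQ, ← Real.exp_nat_mul]
        congr 1
        rw [mul_div_assoc', hdiv]
      have hBn : B n = 1 - q n ^ (k n) * (1 + (k n : ℝ) * (1 - q n)) := by
        rw [hB_def, wgB]; ring
      rw [hBn, hqk]
      have hk1q : (k n : ℝ) * (1 - q n) ≤ -(Real.sqrt (k n) * γ n) := by
        have hexp : 1 - γ n / Real.sqrt (k n) ≤ Real.exp (-(γ n / Real.sqrt (k n))) := by
          have := Real.add_one_le_exp (-(γ n / Real.sqrt (k n)))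
          linarith
        have hq_ge : 1 - q n ≤ -(γ n / Real.sqrt (k n)) := by
          rw [hq_def, wgQ]
          nlinarith [Real.add_one_le_exp (γ n / Real.sqrt (k n))]
        have hkc : (0:ℝ) ≤ (k n : ℝ) := (k n).cast_nonneg
        have : (k n : ℝ) * (1 - q n) ≤ (k n : ℝ) * (-(γ n / Real.sqrt (k n))) :=
          mul_le_mul_of_nonneg_left hq_ge hkc
        calc (k n : ℝ) * (1 - q n) ≤ (k n : ℝ) * (-(γ n / Real.sqrt (k n))) := this
          _ = -((k n : ℝ) * γ n / Real.sqrt (k n)) := by ring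
          _ = -(Real.sqrt (k n) * γ n) := by rw [hdiv]
      have hexp_pos : (0:ℝ) < Real.exp (Real.sqrt (k n) * γ n) := Real.exp_pos _
      have : Real.exp (Real.sqrt (k n) * γ n) * (1 + (k n : ℝ) * (1 - q n)) ≤
          (1 + -(Real.sqrt (k n) * γ n)) * Real.exp (-(-(Real.sqrt (k n) * γ n))) := by
        rw [neg_neg, mul_comm]
        exact mul_le_mul_of_nonneg_right (by linarith) hexp_pos.le
      linarith
    · -- upper bound B ≤ 1
      filter_upwards [h1] with n hn
      have hBn : B n = 1 - q n ^ (k n) * (1 + (k n : ℝ) * (1 - q n)) := by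
        rw [hB_def, wgB]; ring
      have h1q : 0 ≤ 1 - q n := by linarith [hq_lt_one n hn]
      have hqk : (0:ℝ) ≤ q n ^ (k n) := pow_nonneg (hq_pos n).le _
      have hkc : (0:ℝ) ≤ (k n : ℝ) := (k n).cast_nonneg
      have hprod : 0 ≤ q n ^ (k n) * (1 + (k n : ℝ) * (1 - q n)) :=
        mul_nonneg hqk (by nlinarith [mul_nonneg hkc h1q])
      linarith [hBn.ge, hBn.le]
  -- A := (x/(1-q))^2 → 1
  have hA1 : Tendsto (fun n => (x n / (1 - q n))^2) atTop (nhds 1) := by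
    have hslope : Tendsto (fun y : ℝ => (Real.exp y - 1) / y) (nhdsWithin 0 {0}ᶜ) (nhds 1) := by
      have h := (Real.hasDerivAt_exp 0)
      rw [hasDerivAt_iff_tendsto_slope] at h
      simp only [slope_def_field, Real.exp_zero] at h
      refine h.congr fun y => ?_
      simp [slope_def_field, Real.exp_zero]
    have hcomp : Tendsto (fun n => -(x n)) atTop (nhdsWithin 0 {0}ᶜ) := by
      rw [tendsto_nhdsWithin_iff]
      constructor
      · simpa using hx0.neg
      · filter_upwards [h1] with n hn
        simp only [Set.mem_compl_iff, Set.mem_singleton_iff]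
        have := hx_pos n hn
        intro hcon
        rw [neg_eq_zero] at hcon
        linarith
    have h2 : Tendsto (fun n => (Real.exp (-(x n)) - 1) / (-(x n))) atTop (nhds 1) :=
      hslope.comp hcomp
    have h3 : Tendsto (fun n => (1 - q n) / x n) atTop (nhds 1) := by
      refine h2.congr fun n => ?_
      have hq_eq : q n = Real.exp (-(x n)) := by
        rw [hq_def, wgQ, hx_def, wgX]; congr 1; ring
      rw [hq_eq]
      ring
    have h4 : Tendsto (fun n => x n / (1 - q n)) atTop (nhds 1) := by
      have := h3.inv₀ one_ne_zero
      simp only [inv_div, inv_one] at this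
      exact this
    have := h4.pow 2
    simpa using this
  -- combine limits
  have hf : Tendsto (fun n => (x n / (1 - q n))^2 * (q n * B n)) atTop (nhds 1) := by
    have := hA1.mul (hq1.mul hB1)
    simpa using this
  -- eventual equality
  apply hf.congr'
  filter_upwards [h1] with n hn
  have hs := hs_pos n hn
  have hxp := hx_pos n hn
  have h1q : 0 < 1 - q n := by linarith [hq_lt_one n hn]
  have hk0 : ((k n : ℝ)) ≠ 0 := by positivity
  have hks : (k n : ℝ) = Real.sqrt (k n) ^ 2 := (Real.sq_sqrt (k n).cast_nonneg).symm
  have hγx : γ n = -(Real.sqrt (k n) * x n) := by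
    rw [hx_def, wgX]; field_simp
  -- rewrite sum
  have hsum_eq : ∑ j ∈ Finset.Icc 1 (k n), (j : ℝ) * Real.exp (j * γ n / Real.sqrt (k n))
      = ∑ j ∈ Finset.Icc 1 (k n), (j : ℝ) * q n ^ j := by
    refine Finset.sum_congr rfl fun j _ => ?_
    rw [hq_def, wgQ, mul_div_assoc, Real.exp_nat_mul]
  have hkey := sum_mul_geom_aux (q n) (k n)
  have hS : ∑ j ∈ Finset.Icc 1 (k n), (j : ℝ) * q n ^ j
      = (q n * B n) / (1 - q n)^2 := by
    rw [eq_div_iff (by positivity)]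
    rw [mul_comm _ ((1 - q n)^2), hkey, hB_def, wgB]
    ring
  have hsq : Real.sqrt (k n) ^ 2 = (k n : ℝ) := Real.sq_sqrt (k n).cast_nonneg
  have hγ2 : (γ n)^2 = (k n : ℝ) * (x n)^2 := by
    rw [hγx]
    linear_combination (x n)^2 * hsq
  rw [hsum_eq, hS, hγ2]
  field_simp
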